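/- The generalized Riemann tensor of a torsion-free Courant algebroid connection, GRm(w,z,x,y) := (1/2)[w^δ y^β (x^α[D_α,D_β]z_δ + z^α[D_α,D_δ]x_β − (D_α x_β)(D^α z_δ))], is C∞(M)-multilinear in all four arguments and satisfies the symmetries GRm_{αβγδ} = GRm_{[αβ]γδ} = GRm_{αβ[γδ]} = GRm_{δγβα}. -/

import Mathlib

/-- Algebraic model of a Courant algebroid: the commutative ring `R` plays the
role of the smooth functions `C^∞(M)`, `E` plays the role of the module of
sections `Γ(E)`, and vector fields on `M` are modelled as `Derivation ℝ R R`.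
The four axioms of Definition 2.1 are `jacobi`, `leibniz`, `invariance`,
`symmetrized`; `Dop` is the operator `𝒟 = ρ^T ∘ d`, characterized by
`⟨𝒟 f, w⟩ = ρ(w) f`. -/
structure CourantAlgebroid (R : Type) [CommRing R] [Algebra ℝ R]
    (E : Type) [AddCommGroup E] [Module R E] : Type where
  bracket : E → E → E
  ip : E →ₗ[R] E →ₗ[R] R
  rho : E →ₗ[R] Derivation ℝ R R
  Dop : R → E
  ip_symm : ∀ u v, ip u v = ip v u
  ip_nondeg : ∀ u, (∀ v, ip u v = 0) → u = 0
  ip_Dop : ∀ f w, ip (Dop f) w = rho w f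
  bracket_add_left : ∀ u v w, bracket (u + v) w = bracket u w + bracket v w
  bracket_add_right : ∀ u v w, bracket u (v + w) = bracket u v + bracket u w
  jacobi : ∀ u v w, bracket u (bracket v w) = bracket (bracket u v) w + bracket v (bracket u w)
  leibniz : ∀ u (f : R) v, bracket u (f • v) = f • bracket u v + rho u f • v
  invariance : ∀ u v w, rho u (ip v w) = ip (bracket u v) w + ip v (bracket u w)
  symmetrized : ∀ u v, bracket u v + bracket v u = Dop (ip u v)

/-- A Courant algebroid connection on `E`: `C^∞`-linear in the direction,
a derivation in the second slot, and compatible with the pairing. -/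
structure CAConnection (R : Type) [CommRing R] [Algebra ℝ R]
    (E : Type) [AddCommGroup E] [Module R E]
    (CA : CourantAlgebroid R E) : Type where
  D : E → E → E
  add_left : ∀ u v w, D (u + v) w = D u w + D v w
  smul_left : ∀ (f : R) u v, D (f • u) v = f • D u v
  add_right : ∀ u v w, D u (v + w) = D u v + D u w
  leibniz : ∀ u (f : R) v, D u (f • v) = f • D u v + CA.rho u f • v
  compat : ∀ u v w, CA.rho u (CA.ip v w) = CA.ip (D u v) w + CA.ip v (D u w)

/-- The torsion of a Courant algebroid connection, as a trilinear form:
`T_D(u,v,w) = ⟨D_u v − D_v u − [u,v], w⟩ + ⟨D_w u, v⟩`. -/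
def torsion {R : Type} [CommRing R] [Algebra ℝ R]
    {E : Type} [AddCommGroup E] [Module R E]
    {CA : CourantAlgebroid R E} (D : CAConnection R E CA) (u v w : E) : R :=
  CA.ip (D.D u v - D.D v u - CA.bracket u v) w + CA.ip (D.D w u) v

/-- The second covariant derivative `D²_{x,y} z = D_x D_y z − D_{D_x y} z`. -/
def Hess {R : Type} [CommRing R] [Algebra ℝ R]
    {E : Type} [AddCommGroup E] [Module R E]
    {CA : CourantAlgebroid R E} (D : CAConnection R E CA) (x y z : E) : E :=
  D.D x (D.D y z) - D.D (D.D x y) z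

open Finset in
/-- The generalized Riemann tensor of a torsion-free Courant algebroid
connection (Definition 4.1), written invariantly:
`GRm(w,z,x,y) = ½( ⟨(D²_{x,y} − D²_{y,x})z, w⟩ + ⟨(D²_{z,w} − D²_{w,z})x, y⟩
  − Σ_α ⟨D_{e_α}x, y⟩⟨D_{e^α}z, w⟩ )`,
the contraction `(D_α x_β)(D^α z_δ) y^β w^δ` being taken in the frame `b`
with dual frame `b'`. -/
noncomputable def GRm {R : Type} [CommRing R] [Algebra ℝ R]
    {E : Type} [AddCommGroup E] [Module R E] [Module ℝ E]
    {CA : CourantAlgebroid R E} (D : CAConnection R E CA)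
    (n : ℕ) (b b' : Fin n → E) (w z x y : E) : R :=
  (1/2 : ℝ) •
    (CA.ip (Hess D x y z - Hess D y x z) w
     + CA.ip (Hess D z w x - Hess D w z x) y
     - ∑ k, CA.ip (D.D (b k) x) y * CA.ip (D.D (b' k) z) w)


set_option linter.unusedSectionVars false

section Aux
variable {R : Type} [CommRing R] [Algebra ℝ R]
  {E : Type} [AddCommGroup E] [Module R E] [Module ℝ E] [IsScalarTower ℝ R E]
  {CA : CourantAlgebroid R E} (D : CAConnection R E CA)

lemma ip_ext {a c : E} (h : ∀ t, CA.ip a t = CA.ip c t) : a = c := by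
  have h0 : ∀ v, CA.ip (a - c) v = 0 := by
    intro v; rw [map_sub, LinearMap.sub_apply, h v, sub_self]
  exact sub_eq_zero.mp (CA.ip_nondeg _ h0)

lemma ip_rsmul (r : ℝ) (u t : E) : CA.ip (r • u) t = r • CA.ip u t := by
  rw [← algebraMap_smul R r u, map_smul, LinearMap.smul_apply, ← algebraMap_smul R r (CA.ip u t)]

lemma rho_rsmul (u : E) (r : ℝ) (g : R) : CA.rho u (r • g) = r • CA.rho u g :=
  Derivation.map_smul (CA.rho u) r g

lemma rho_apply_add (a c : E) (g : R) : CA.rho (a + c) g = CA.rho a g + CA.rho c g := by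
  rw [map_add]; rfl

lemma rho_apply_sub (a c : E) (g : R) : CA.rho (a - c) g = CA.rho a g - CA.rho c g := by
  rw [map_sub]; rfl

lemma rho_apply_smul (f : R) (a : E) (g : R) : CA.rho (f • a) g = f * CA.rho a g := by
  rw [map_smul]; rfl

lemma Dop_add (f g : R) : CA.Dop (f + g) = CA.Dop f + CA.Dop g := by
  refine ip_ext (CA := CA) fun t => ?_
  simp only [map_add, LinearMap.add_apply, CA.ip_Dop]

lemma Dop_rsmul (r : ℝ) (f : R) : CA.Dop (r • f) = r • CA.Dop f := by
  refine ip_ext (CA := CA) fun t => ?_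
  rw [CA.ip_Dop, rho_rsmul, ip_rsmul, CA.ip_Dop]

lemma bracket_rsmul_right (u : E) (r : ℝ) (v : E) :
    CA.bracket u (r • v) = r • CA.bracket u v := by
  rw [← algebraMap_smul R r v, CA.leibniz, Derivation.map_algebraMap, zero_smul, add_zero,
    algebraMap_smul R r (CA.bracket u v)]

end Aux

section Aux2
variable {R : Type} [CommRing R] [Algebra ℝ R]
  {E : Type} [AddCommGroup E] [Module R E] [Module ℝ E] [IsScalarTower ℝ R E]
  {CA : CourantAlgebroid R E} (D : CAConnection R E CA)

lemma half_cancel {a c : R} (h : a + a = c + c) : a = c := by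
  have h2 : (2:ℝ) • a = (2:ℝ) • c := by rw [two_smul, two_smul]; exact h
  have h3 := congrArg (fun r : R => (1/2:ℝ) • r) h2
  simp only [smul_smul] at h3
  norm_num at h3
  exact h3

lemma bDop_sq (u v : E) :
    CA.bracket u (CA.Dop (CA.ip v v)) = CA.Dop (CA.rho u (CA.ip v v)) := by
  calc CA.bracket u (CA.Dop (CA.ip v v))
      = CA.bracket u (CA.bracket v v + CA.bracket v v) := by rw [CA.symmetrized]
    _ = CA.Dop (CA.ip (CA.bracket u v) v) + CA.Dop (CA.ip (CA.bracket u v) v) := by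
        rw [CA.bracket_add_right, CA.jacobi, CA.symmetrized]
    _ = CA.Dop (CA.rho u (CA.ip v v)) := by
        rw [← Dop_add, CA.invariance, CA.ip_symm v (CA.bracket u v)]

lemma bDop_ip (u x y t : E) :
    CA.ip (CA.bracket u (CA.Dop (CA.ip x y))) t
      = CA.rho t (CA.rho u (CA.ip x y)) := by
  have hsq : ∀ v : E, CA.ip (CA.bracket u (CA.Dop (CA.ip v v))) t
      = CA.rho t (CA.rho u (CA.ip v v)) := by
    intro v; rw [bDop_sq, CA.ip_Dop]
  have hx : CA.ip (x + y) (x + y)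
      = CA.ip x x + CA.ip y y + CA.ip x y + CA.ip x y := by
    simp only [map_add, LinearMap.add_apply]
    rw [CA.ip_symm y x]; ring
  have h1 := hsq (x + y)
  rw [hx] at h1
  simp only [Dop_add, CA.bracket_add_right, map_add, LinearMap.add_apply] at h1
  rw [hsq x, hsq y] at h1
  exact half_cancel (by linear_combination h1)

lemma rho_bracket_pair (u v x y : E) :
    CA.rho (CA.bracket u v) (CA.ip x y)
      = CA.rho u (CA.rho v (CA.ip x y)) - CA.rho v (CA.rho u (CA.ip x y)) := by
  have hinv := CA.invariance u (CA.Dop (CA.ip x y)) v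
  rw [CA.ip_Dop, CA.ip_Dop, bDop_ip] at hinv
  linear_combination -hinv

lemma tf_ip (htf : ∀ u v w, torsion D u v w = 0) (u v : E) (g : R) :
    CA.rho (D.D u v) g - CA.rho (D.D v u) g - CA.rho (CA.bracket u v) g
      = - CA.ip (D.D (CA.Dop g) u) v := by
  have h := htf u v (CA.Dop g)
  unfold torsion at h
  rw [CA.ip_symm (D.D u v - D.D v u - CA.bracket u v) (CA.Dop g), CA.ip_Dop,
    rho_apply_sub, rho_apply_sub] at h
  linear_combination h

lemma D_rsmul_left (r : ℝ) (u x : E) : D.D (r • u) x = r • D.D u x := by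
  rw [← algebraMap_smul R r u, D.smul_left, algebraMap_smul R r (D.D u x)]

lemma D_zero_left (x : E) : D.D 0 x = 0 := by
  have := D.smul_left 0 x x
  simpa using this

lemma D_sum_left {m : ℕ} (f : Fin m → R) (u : Fin m → E) (x : E) :
    D.D (∑ k, f k • u k) x = ∑ k, f k • D.D (u k) x := by
  classical
  have key : ∀ s : Finset (Fin m),
      D.D (∑ k ∈ s, f k • u k) x = ∑ k ∈ s, f k • D.D (u k) x := by
    intro s
    induction s using Finset.induction with
    | empty => simp [D_zero_left]
    | insert _ _ h ih =>
        rw [Finset.sum_insert h, D.add_left, D.smul_left, ih, Finset.sum_insert h]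
  exact key Finset.univ

lemma hess_pair (z w x y : E) :
    CA.ip (Hess D z w x) y + CA.ip x (Hess D z w y)
      = CA.rho z (CA.rho w (CA.ip x y)) - CA.rho (D.D z w) (CA.ip x y)
        - CA.ip (D.D z x) (D.D w y) - CA.ip (D.D w x) (D.D z y) := by
  have h1 := congrArg (CA.rho z) (D.compat w x y)
  rw [map_add] at h1
  have h2 := D.compat z (D.D w x) y
  have h3 := D.compat z x (D.D w y)
  have h5 := D.compat (D.D z w) x y
  unfold Hess
  simp only [map_sub, LinearMap.sub_apply]
  linear_combination h5 - h1 - h2 - h3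

end Aux2

section Aux3
variable {R : Type} [CommRing R] [Algebra ℝ R]
  {E : Type} [AddCommGroup E] [Module R E] [Module ℝ E] [IsScalarTower ℝ R E]
  {CA : CourantAlgebroid R E} (D : CAConnection R E CA)
  {n : ℕ} {b b' : Fin n → E}

lemma D_Dop_ip (hrepr : ∀ x : E, ∑ k, CA.ip x (b' k) • b k = x) (g : R) (x y : E) :
    CA.ip (D.D (CA.Dop g) x) y = ∑ k, CA.rho (b' k) g * CA.ip (D.D (b k) x) y := by
  conv_lhs => rw [← hrepr (CA.Dop g)]
  rw [D_sum_left]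
  simp only [map_sum, LinearMap.sum_apply, map_smul, LinearMap.smul_apply, smul_eq_mul,
    CA.ip_Dop]

lemma curv_pair (htf : ∀ u v w, torsion D u v w = 0)
    (hrepr : ∀ x : E, ∑ k, CA.ip x (b' k) • b k = x) (x y z w : E) :
    CA.ip (Hess D x y z - Hess D y x z) w + CA.ip z (Hess D x y w - Hess D y x w)
      = (∑ k, CA.ip (D.D (b k) x) y * CA.ip (D.D (b' k) z) w)
        + ∑ k, CA.ip (D.D (b k) x) y * CA.ip z (D.D (b' k) w) := by
  have hA := hess_pair D x y z w
  have hB := hess_pair D y x z w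
  have hbr := rho_bracket_pair (CA := CA) x y z w
  have htf' := tf_ip D htf x y (CA.ip z w)
  have hD := D_Dop_ip D hrepr (CA.ip z w) x y
  have hsum : ∑ k, CA.rho (b' k) (CA.ip z w) * CA.ip (D.D (b k) x) y
      = (∑ k, CA.ip (D.D (b k) x) y * CA.ip (D.D (b' k) z) w)
        + ∑ k, CA.ip (D.D (b k) x) y * CA.ip z (D.D (b' k) w) := by
    rw [← Finset.sum_add_distrib]
    refine Finset.sum_congr rfl fun k _ => ?_
    rw [D.compat (b' k) z w]
    ring
  simp only [map_sub, LinearMap.sub_apply]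
  linear_combination hA - hB - hbr - htf' + hD + hsum

lemma D_rsum_left {m : ℕ} (r : Fin m → ℝ) (u : Fin m → E) (x : E) :
    D.D (∑ k, r k • u k) x = ∑ k, r k • D.D (u k) x := by
  classical
  have key : ∀ s : Finset (Fin m),
      D.D (∑ k ∈ s, r k • u k) x = ∑ k ∈ s, r k • D.D (u k) x := by
    intro s
    induction s using Finset.induction with
    | empty => simp [D_zero_left]
    | insert _ _ h ih =>
        rw [Finset.sum_insert h, D.add_left, D_rsmul_left, ih, Finset.sum_insert h]
  exact key Finset.univ

lemma frame_expand {η : Fin n → Fin n → ℝ} (hb' : ∀ i, b' i = ∑ j, η i j • b j)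
    (x y : E) (k : Fin n) :
    CA.ip (D.D (b' k) x) y = ∑ j, η k j • CA.ip (D.D (b j) x) y := by
  rw [hb' k, D_rsum_left]
  rw [map_sum, LinearMap.sum_apply]
  exact Finset.sum_congr rfl fun j _ => ip_rsmul (η k j) _ y

lemma sum_swap {m : ℕ} (η : Fin m → Fin m → ℝ) (hηsym : ∀ i j, η i j = η j i)
    (F G F' G' : Fin m → R)
    (hF : ∀ k, F' k = ∑ j, η k j • F j) (hG : ∀ k, G' k = ∑ j, η k j • G j) :
    ∑ k, F k * G' k = ∑ k, G k * F' k := by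
  calc ∑ k, F k * G' k = ∑ k, ∑ j, η k j • (F k * G j) := by
        refine Finset.sum_congr rfl fun k _ => ?_
        rw [hG k, Finset.mul_sum]
        exact Finset.sum_congr rfl fun j _ => mul_smul_comm (η k j) (F k) (G j)
    _ = ∑ j, ∑ k, η k j • (F k * G j) := Finset.sum_comm
    _ = ∑ k, G k * F' k := by
        refine Finset.sum_congr rfl fun j _ => ?_
        rw [hF j, Finset.mul_sum]
        refine Finset.sum_congr rfl fun k _ => ?_
        rw [hηsym k j, mul_comm (F k) (G j)]
        exact (mul_smul_comm (η j k) (G j) (F k)).symm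

lemma Hess_smul1 (f : R) (u v z : E) : Hess D (f • u) v z = f • Hess D u v z := by
  unfold Hess
  rw [D.smul_left, D.smul_left, D.smul_left, smul_sub]

lemma Hess_smul2 (f : R) (u v z : E) : Hess D u (f • v) z = f • Hess D u v z := by
  unfold Hess
  rw [D.smul_left, D.leibniz, D.leibniz, D.add_left, D.smul_left, D.smul_left, smul_sub]
  abel

lemma Hess_add1 (u u' v z : E) :
    Hess D (u + u') v z = Hess D u v z + Hess D u' v z := by
  unfold Hess
  rw [D.add_left, D.add_left, D.add_left]
  abel

lemma Hess_add2 (u v v' z : E) :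
    Hess D u (v + v') z = Hess D u v z + Hess D u v' z := by
  unfold Hess
  rw [D.add_left, D.add_right, D.add_right, D.add_left]
  abel

lemma GRm_expand (w z x y : E) :
    GRm D n b b' w z x y
      = (1/2 : ℝ) • (CA.ip (Hess D x y z) w - CA.ip (Hess D y x z) w
          + (CA.ip (Hess D z w x) y - CA.ip (Hess D w z x) y)
          - ∑ k, CA.ip (D.D (b k) x) y * CA.ip (D.D (b' k) z) w) := by
  unfold GRm
  simp only [map_sub, LinearMap.sub_apply]

end Aux3

section Aux4
variable {R : Type} [CommRing R] [Algebra ℝ R]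
  {E : Type} [AddCommGroup E] [Module R E] [Module ℝ E] [IsScalarTower ℝ R E]
  {CA : CourantAlgebroid R E} (D : CAConnection R E CA)
  {n : ℕ} {b b' : Fin n → E}

lemma GRm_skew_wz (htf : ∀ u v w, torsion D u v w = 0)
    (hrepr : ∀ x : E, ∑ k, CA.ip x (b' k) • b k = x) (w z x y : E) :
    GRm D n b b' w z x y = - GRm D n b b' z w x y := by
  rw [eq_neg_iff_add_eq_zero, GRm_expand, GRm_expand, ← smul_add]
  have hcp := curv_pair D htf hrepr x y z w
  simp only [map_sub, LinearMap.sub_apply] at hcp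
  have e1 : CA.ip (Hess D x y w) z = CA.ip z (Hess D x y w) := CA.ip_symm _ _
  have e2 : CA.ip (Hess D y x w) z = CA.ip z (Hess D y x w) := CA.ip_symm _ _
  have hS : ∑ k, CA.ip (D.D (b k) x) y * CA.ip (D.D (b' k) w) z
      = ∑ k, CA.ip (D.D (b k) x) y * CA.ip z (D.D (b' k) w) :=
    Finset.sum_congr rfl fun k _ => by rw [CA.ip_symm (D.D (b' k) w) z]
  have hz : (CA.ip (Hess D x y z) w - CA.ip (Hess D y x z) w
          + (CA.ip (Hess D z w x) y - CA.ip (Hess D w z x) y)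
          - ∑ k, CA.ip (D.D (b k) x) y * CA.ip (D.D (b' k) z) w)
        + (CA.ip (Hess D x y w) z - CA.ip (Hess D y x w) z
          + (CA.ip (Hess D w z x) y - CA.ip (Hess D z w x) y)
          - ∑ k, CA.ip (D.D (b k) x) y * CA.ip (D.D (b' k) w) z) = 0 := by
    linear_combination hcp + e1 - e2 - hS
  rw [hz, smul_zero]

lemma GRm_sigma (η : Fin n → Fin n → ℝ) (hηsym : ∀ i j, η i j = η j i)
    (hb' : ∀ i, b' i = ∑ j, η i j • b j) (w z x y : E) :
    GRm D n b b' w z x y = GRm D n b b' y x z w := by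
  rw [GRm_expand, GRm_expand]
  refine congrArg (fun t => (1/2 : ℝ) • t) ?_
  have hswap := sum_swap η hηsym
    (fun k => CA.ip (D.D (b k) x) y) (fun k => CA.ip (D.D (b k) z) w)
    (fun k => CA.ip (D.D (b' k) x) y) (fun k => CA.ip (D.D (b' k) z) w)
    (fun k => frame_expand D hb' x y k) (fun k => frame_expand D hb' z w k)
  have hswap' : (∑ k, CA.ip (D.D (b k) x) y * CA.ip (D.D (b' k) z) w)
      = ∑ k, CA.ip (D.D (b k) z) w * CA.ip (D.D (b' k) x) y := hswap
  linear_combination -hswap'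

lemma GRm_smul_w (f : R) (w z x y : E) :
    GRm D n b b' (f • w) z x y = f * GRm D n b b' w z x y := by
  rw [GRm_expand, GRm_expand, mul_smul_comm]
  refine congrArg (fun t => (1/2 : ℝ) • t) ?_
  have hsum : ∑ k, CA.ip (D.D (b k) x) y * CA.ip (D.D (b' k) z) (f • w)
      = f * ∑ k, CA.ip (D.D (b k) x) y * CA.ip (D.D (b' k) z) w := by
    rw [Finset.mul_sum]
    refine Finset.sum_congr rfl fun k _ => ?_
    rw [map_smul, smul_eq_mul]
    ring
  rw [hsum, Hess_smul1, Hess_smul2]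
  simp only [map_smul, LinearMap.smul_apply, smul_eq_mul]
  ring

lemma GRm_add_w (w w' z x y : E) :
    GRm D n b b' (w + w') z x y = GRm D n b b' w z x y + GRm D n b b' w' z x y := by
  rw [GRm_expand, GRm_expand, GRm_expand, ← smul_add]
  refine congrArg (fun t => (1/2 : ℝ) • t) ?_
  have hsum : ∑ k, CA.ip (D.D (b k) x) y * CA.ip (D.D (b' k) z) (w + w')
      = (∑ k, CA.ip (D.D (b k) x) y * CA.ip (D.D (b' k) z) w)
        + ∑ k, CA.ip (D.D (b k) x) y * CA.ip (D.D (b' k) z) w' := by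
    rw [← Finset.sum_add_distrib]
    refine Finset.sum_congr rfl fun k _ => ?_
    rw [map_add]
    ring
  rw [hsum, Hess_add1, Hess_add2]
  simp only [map_add, LinearMap.add_apply]
  ring

end Aux4
open Finset in
/-- Propositions 4.2, 4.3: the generalized Riemann tensor of a
torsion-free Courant algebroid connection is `C^∞(M)`-multilinear in all four
arguments, and has the symmetries
`GRm_{αβγδ} = GRm_{[αβ]γδ} = GRm_{αβ[γδ]} = GRm_{δγβα}`; in argument form:
antisymmetric in `(w,z)`, antisymmetric in `(x,y)`, and symmetric under
`(w,z,x,y) ↦ (y,x,z,w)`.  The frame `b` with dual frame `b'` is admissible: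
`b' i = Σ_j η i j • b j` with `η` real symmetric, and reproduces sections. -/
theorem GRm_tensorial_and_symmetries
    (R : Type) [CommRing R] [Algebra ℝ R]
    (E : Type) [AddCommGroup E] [Module R E] [Module ℝ E] [IsScalarTower ℝ R E]
    (CA : CourantAlgebroid R E) (D : CAConnection R E CA)
    (htf : ∀ u v w, torsion D u v w = 0)
    (n : ℕ) (b b' : Fin n → E)
    (η : Fin n → Fin n → ℝ) (hηsym : ∀ i j, η i j = η j i)
    (hb' : ∀ i, b' i = ∑ j, η i j • b j)
    (hrepr : ∀ x, ∑ k, CA.ip x (b' k) • b k = x) :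
    (∀ (f : R) w z x y, GRm D n b b' (f • w) z x y = f * GRm D n b b' w z x y) ∧
    (∀ (f : R) w z x y, GRm D n b b' w (f • z) x y = f * GRm D n b b' w z x y) ∧
    (∀ (f : R) w z x y, GRm D n b b' w z (f • x) y = f * GRm D n b b' w z x y) ∧
    (∀ (f : R) w z x y, GRm D n b b' w z x (f • y) = f * GRm D n b b' w z x y) ∧
    (∀ w w' z x y, GRm D n b b' (w + w') z x y =
      GRm D n b b' w z x y + GRm D n b b' w' z x y) ∧
    (∀ w z z' x y, GRm D n b b' w (z + z') x y =
      GRm D n b b' w z x y + GRm D n b b' w z' x y) ∧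
    (∀ w z x x' y, GRm D n b b' w z (x + x') y =
      GRm D n b b' w z x y + GRm D n b b' w z x' y) ∧
    (∀ w z x y y', GRm D n b b' w z x (y + y') =
      GRm D n b b' w z x y + GRm D n b b' w z x y') ∧
    (∀ w z x y, GRm D n b b' w z x y = - GRm D n b b' z w x y) ∧
    (∀ w z x y, GRm D n b b' w z x y = - GRm D n b b' w z y x) ∧
    (∀ w z x y, GRm D n b b' w z x y = GRm D n b b' y x z w) := by
  have hσ : ∀ w z x y : E, GRm D n b b' w z x y = GRm D n b b' y x z w :=
    fun w z x y => GRm_sigma D η hηsym hb' w z x y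
  have hwz : ∀ w z x y : E, GRm D n b b' w z x y = - GRm D n b b' z w x y :=
    fun w z x y => GRm_skew_wz D htf hrepr w z x y
  have hsw : ∀ (f : R) (w z x y : E),
      GRm D n b b' (f • w) z x y = f * GRm D n b b' w z x y :=
    fun f w z x y => GRm_smul_w D f w z x y
  have hsz : ∀ (f : R) (w z x y : E),
      GRm D n b b' w (f • z) x y = f * GRm D n b b' w z x y := by
    intro f w z x y
    rw [hwz w (f • z) x y, hsw f z w x y, hwz w z x y]; ring
  have hsx : ∀ (f : R) (w z x y : E),
      GRm D n b b' w z (f • x) y = f * GRm D n b b' w z x y := by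
    intro f w z x y
    rw [hσ w z (f • x) y, hsz f y x z w, ← hσ w z x y]
  have hsy : ∀ (f : R) (w z x y : E),
      GRm D n b b' w z x (f • y) = f * GRm D n b b' w z x y := by
    intro f w z x y
    rw [hσ w z x (f • y), hsw f y x z w, ← hσ w z x y]
  have haw : ∀ w w' z x y : E, GRm D n b b' (w + w') z x y =
      GRm D n b b' w z x y + GRm D n b b' w' z x y :=
    fun w w' z x y => GRm_add_w D w w' z x y
  have haz : ∀ w z z' x y : E, GRm D n b b' w (z + z') x y =
      GRm D n b b' w z x y + GRm D n b b' w z' x y := by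
    intro w z z' x y
    rw [hwz w (z + z') x y, haw z z' w x y, hwz w z x y, hwz w z' x y]; ring
  have hax : ∀ w z x x' y : E, GRm D n b b' w z (x + x') y =
      GRm D n b b' w z x y + GRm D n b b' w z x' y := by
    intro w z x x' y
    rw [hσ w z (x + x') y, haz y x x' z w, ← hσ w z x y, ← hσ w z x' y]
  have hay : ∀ w z x y y' : E, GRm D n b b' w z x (y + y') =
      GRm D n b b' w z x y + GRm D n b b' w z x y' := by
    intro w z x y y'
    rw [hσ w z x (y + y'), haw y y' x z w, ← hσ w z x y, ← hσ w z x y']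
  have hxy : ∀ w z x y : E, GRm D n b b' w z x y = - GRm D n b b' w z y x := by
    intro w z x y
    rw [hσ w z x y, hwz y x z w, hσ w z y x]
  exact ⟨hsw, hsz, hsx, hsy, haw, haz, hax, hay, hwz, hxy, hσ⟩
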